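/- The 5-dimensional Lebesgue volume of the set {x ∈ S : x1+2x2+x3+2x5 ≥ 1, 2x1+x2+2x3+x5 ≥ 1, 2(x1+x2+x5) ≤ 1, 2(x1+x2+x3) ≤ 1} (a is the antiplurality winner and also the Condorcet loser) equals 17/207360; that is, the limiting probability of Borda's paradox for the antiplurality rule under IAC for 3 candidates is 3·120·(17/207360) = 17/576. -/

import Mathlib

open MeasureTheory

open Set


lemma volume_peel {n : ℕ} (i : Fin (n+1)) (s : Set (Fin (n+1) → ℝ)) (hs : MeasurableSet s) :
    volume s = ∫⁻ t : ℝ, volume {y : Fin n → ℝ | Fin.insertNth i t y ∈ s} := by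
  have hmp := measurePreserving_piFinSuccAbove (fun _ : Fin (n+1) => (volume : Measure ℝ)) i
  set e := MeasurableEquiv.piFinSuccAbove (fun _ : Fin (n+1) => ℝ) i with he
  have key : volume s = ((volume : Measure ℝ).prod (Measure.pi fun _ : Fin n => volume))
      (e.symm ⁻¹' s) := by
    rw [volume_pi, ← hmp.measure_preimage (e.symm.measurable hs).nullMeasurableSet]
    congr 1
    ext x; simp
  rw [key, Measure.prod_apply (e.symm.measurable hs)]
  refine lintegral_congr fun t => ?_
  rfl

lemma peel_step {n : ℕ} (i : Fin (n+1)) (s : Set (Fin (n+1) → ℝ)) (hs : MeasurableSet s)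
    (l u : ℝ) (g : ℝ → ℝ) (G : ℝ) (hlu : l ≤ u)
    (hcont : ContinuousOn g (Icc l u))
    (hnn : ∀ t ∈ Icc l u, 0 ≤ g t)
    (hslice : ∀ t : ℝ, volume {y : Fin n → ℝ | Fin.insertNth i t y ∈ s} =
       if t ∈ Icc l u then ENNReal.ofReal (g t) else 0)
    (hG : ∫ t in l..u, g t = G) :
    volume s = ENNReal.ofReal G := by
  rw [volume_peel i s hs]
  have h1 : ∀ t : ℝ, volume {y : Fin n → ℝ | Fin.insertNth i t y ∈ s} =
      (Icc l u).indicator (fun t => ENNReal.ofReal (g t)) t := by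
    intro t
    rw [hslice t]
    by_cases h : t ∈ Icc l u <;> simp [h]
  simp_rw [h1]
  rw [lintegral_indicator measurableSet_Icc,
    ← ofReal_integral_eq_lintegral_ofReal
      (hcont.integrableOn_Icc)
      ((ae_restrict_iff' measurableSet_Icc).2 (Filter.Eventually.of_forall hnn))]
  congr 1
  rw [← hG, intervalIntegral.integral_of_le hlu, integral_Icc_eq_integral_Ioc]

lemma volume_fin1 (p q : ℝ) :
    volume {y : Fin 1 → ℝ | p ≤ y 0 ∧ y 0 ≤ q} = ENNReal.ofReal (q - p) := by
  have hm : MeasurableSet {y : Fin 1 → ℝ | p ≤ y 0 ∧ y 0 ≤ q} :=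
    (measurableSet_le measurable_const (measurable_pi_apply 0)).inter
      (measurableSet_le (measurable_pi_apply 0) measurable_const)
  rw [volume_peel 0 _ hm]
  have h2 : ∀ t : ℝ, volume {y : Fin 0 → ℝ | Fin.insertNth (0 : Fin 1) t y ∈
      {y : Fin 1 → ℝ | p ≤ y 0 ∧ y 0 ≤ q}} =
      (Icc p q).indicator (fun _ => 1) t := by
    intro t
    have h1 : {y : Fin 0 → ℝ | Fin.insertNth (0 : Fin 1) t y ∈
        {y : Fin 1 → ℝ | p ≤ y 0 ∧ y 0 ≤ q}} = if t ∈ Icc p q then univ else ∅ := by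
      by_cases h : t ∈ Icc p q
      · rw [if_pos h]
        ext y; simpa using ⟨h.1, h.2⟩
      · rw [if_neg h]
        ext y
        simp only [mem_setOf_eq, mem_empty_iff_false, iff_false]
        intro hy
        exact h ⟨hy.1, hy.2⟩
    rw [h1]
    by_cases h : t ∈ Icc p q <;>
      simp [h, volume_pi, Measure.pi_empty_univ]
  simp_rw [h2]
  rw [lintegral_indicator measurableSet_Icc]
  simp [Real.volume_Icc]

lemma integral_poly (l u c0 c1 c2 c3 c4 : ℝ) :
    ∫ t in l..u, (c0 + c1*t + c2*t^2 + c3*t^3 + c4*t^4) =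
      c0*(u-l) + c1/2*(u^2-l^2) + c2/3*(u^3-l^3) + c3/4*(u^4-l^4) + c4/5*(u^5-l^5) := by
  have h : ∀ t ∈ Set.uIcc l u, HasDerivAt
      (fun x => c0*x + c1/2*x^2 + c2/3*x^3 + c3/4*x^4 + c4/5*x^5)
      (c0 + c1*t + c2*t^2 + c3*t^3 + c4*t^4) t := by
    intro t _
    have h1 := (hasDerivAt_id t).const_mul c0
    have h2 := (hasDerivAt_pow 2 t).const_mul (c1/2)
    have h3 := (hasDerivAt_pow 3 t).const_mul (c2/3)
    have h4 := (hasDerivAt_pow 4 t).const_mul (c3/4)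
    have h5 := (hasDerivAt_pow 5 t).const_mul (c4/5)
    refine ((((h1.add h2).add h3).add h4).add h5).congr_deriv ?_
    push_cast
    ring
  rw [intervalIntegral.integral_eq_sub_of_hasDerivAt h
    ((Continuous.intervalIntegrable (by continuity) l u))]
  ring

def W2c0 (a c b : ℝ) : Set (Fin 2 → ℝ) :=
  {w | (1 - 2*a - b - 2*c ≤ w 1 ∧ w 1 ≤ 1/2 - a - b) ∧ (0 ≤ w 0 ∧ w 0 ≤ 1 - a - b - c - w 1)}

def W3c0 (a c : ℝ) : Set (Fin 3 → ℝ) :=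
  {z | (0 ≤ z 0 ∧ z 0 ≤ 1/2 - a - c) ∧ (1 - 2*a - z 0 - 2*c ≤ z 2 ∧ z 2 ≤ 1/2 - a - z 0) ∧
    (0 ≤ z 1 ∧ z 1 ≤ 1 - a - z 0 - c - z 2)}

def W4c0 (a : ℝ) : Set (Fin 4 → ℝ) :=
  {y | (1/4 - a/2 ≤ y 1 ∧ y 1 ≤ 1/3 - a) ∧ (0 ≤ y 0 ∧ y 0 ≤ 1/2 - a - y 1) ∧
    (1 - 2*a - y 0 - 2*y 1 ≤ y 3 ∧ y 3 ≤ 1/2 - a - y 0) ∧ (0 ≤ y 2 ∧ y 2 ≤ 1 - a - y 0 - y 1 - y 3)}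

def W5c0 : Set (Fin 5 → ℝ) :=
  {x | (0 ≤ x 0 ∧ x 0 ≤ 1/6) ∧ (1/4 - x 0 / 2 ≤ x 2 ∧ x 2 ≤ 1/3 - x 0) ∧
    (0 ≤ x 1 ∧ x 1 ≤ 1/2 - x 0 - x 2) ∧ (1 - 2*x 0 - x 1 - 2*x 2 ≤ x 4 ∧ x 4 ≤ 1/2 - x 0 - x 1) ∧
    (0 ≤ x 3 ∧ x 3 ≤ 1 - x 0 - x 1 - x 2 - x 4)}

lemma meas_W2c0 (a c b : ℝ) : MeasurableSet (W2c0 a c b) := by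
  unfold W2c0
  simp only [Set.setOf_and]
  repeat' apply MeasurableSet.inter
  all_goals exact measurableSet_le (by fun_prop) (by fun_prop)

lemma meas_W3c0 (a c : ℝ) : MeasurableSet (W3c0 a c) := by
  unfold W3c0
  simp only [Set.setOf_and]
  repeat' apply MeasurableSet.inter
  all_goals exact measurableSet_le (by fun_prop) (by fun_prop)

lemma meas_W4c0 (a : ℝ) : MeasurableSet (W4c0 a) := by
  unfold W4c0
  simp only [Set.setOf_and]
  repeat' apply MeasurableSet.inter
  all_goals exact measurableSet_le (by fun_prop) (by fun_prop)

lemma meas_W5c0 : MeasurableSet W5c0 := by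
  unfold W5c0
  simp only [Set.setOf_and]
  repeat' apply MeasurableSet.inter
  all_goals exact measurableSet_le (by fun_prop) (by fun_prop)

lemma vol_W2c0 (a c b : ℝ) (ha0 : 0 ≤ a) (ha1 : a ≤ 1/6) (hc0 : 1/4 - a/2 ≤ c) (hc1 : c ≤ 1/3 - a)
    (hb0 : 0 ≤ b) (hb1 : b ≤ 1/2 - a - c) :
    volume (W2c0 a c b) = ENNReal.ofReal (-1/8 + c/2 + a^2/2 + a*c) := by
  refine peel_step 1 _ (meas_W2c0 a c b) (1 - 2*a - b - 2*c) (1/2 - a - b)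
    (fun t => 1 - a - b - c - t) _ (by linarith) ?_ ?_ ?_ ?_
  · exact Continuous.continuousOn (by fun_prop)
  · intro t ht
    show (0:ℝ) ≤ 1 - a - b - c - t
    linarith [ht.2]
  · intro t
    by_cases h : t ∈ Icc (1 - 2*a - b - 2*c) (1/2 - a - b)
    · rw [if_pos h]
      have hset : {v : Fin 1 → ℝ | Fin.insertNth 1 t v ∈ W2c0 a c b} =
          {v : Fin 1 → ℝ | 0 ≤ v 0 ∧ v 0 ≤ 1 - a - b - c - t} :=
        Set.ext fun v => ⟨fun hv => hv.2, fun hv => ⟨⟨h.1, h.2⟩, hv⟩⟩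
      rw [hset, volume_fin1]
      congr 1; ring
    · rw [if_neg h]
      have hset : {v : Fin 1 → ℝ | Fin.insertNth 1 t v ∈ W2c0 a c b} = ∅ :=
        Set.eq_empty_iff_forall_notMem.2 fun v hv => h ⟨hv.1.1, hv.1.2⟩
      rw [hset]; exact measure_empty
  · have he : Set.EqOn (fun t : ℝ => 1 - a - b - c - t)
        (fun t : ℝ => (1 - a - b - c) + (-1)*t + 0*t^2 + 0*t^3 + 0*t^4)
        (Set.uIcc (1 - 2*a - b - 2*c) (1/2 - a - b)) := fun t _ => by ring
    rw [intervalIntegral.integral_congr he, integral_poly]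
    ring

lemma vol_W3c0 (a c : ℝ) (ha0 : 0 ≤ a) (ha1 : a ≤ 1/6) (hc0 : 1/4 - a/2 ≤ c) (hc1 : c ≤ 1/3 - a) :
    volume (W3c0 a c) = ENNReal.ofReal (-1/16 + a/8 + 3*c/8 - c^2/2 + a^2/4 - a^3/2 - 3*a^2*c/2 - a*c^2) := by
  refine peel_step 0 _ (meas_W3c0 a c) 0 (1/2 - a - c)
    (fun _ => -1/8 + c/2 + a^2/2 + a*c) _ (by linarith) ?_ ?_ ?_ ?_
  · exact Continuous.continuousOn (by fun_prop)
  · intro t ht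
    show (0:ℝ) ≤ -1/8 + c/2 + a^2/2 + a*c
    have hfac : -1/8 + c/2 + a^2/2 + a*c = (1/2 + a) * (c - (1/4 - a/2)) := by ring
    rw [hfac]
    exact mul_nonneg (by linarith) (by linarith)
  · intro t
    by_cases h : t ∈ Icc (0:ℝ) (1/2 - a - c)
    · rw [if_pos h]
      have hset : {w : Fin 2 → ℝ | Fin.insertNth 0 t w ∈ W3c0 a c} = W2c0 a c t :=
        Set.ext fun w => ⟨fun hw => hw.2, fun hw => ⟨⟨h.1, h.2⟩, hw⟩⟩
      rw [hset]
      exact vol_W2c0 a c t ha0 ha1 hc0 hc1 h.1 h.2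
    · rw [if_neg h]
      have hset : {w : Fin 2 → ℝ | Fin.insertNth 0 t w ∈ W3c0 a c} = ∅ :=
        Set.eq_empty_iff_forall_notMem.2 fun w hw => h ⟨hw.1.1, hw.1.2⟩
      rw [hset]; exact measure_empty
  · have he : Set.EqOn (fun _ : ℝ => -1/8 + c/2 + a^2/2 + a*c)
        (fun t : ℝ => (-1/8 + c/2 + a^2/2 + a*c) + 0*t + 0*t^2 + 0*t^3 + 0*t^4)
        (Set.uIcc 0 (1/2 - a - c)) := fun t _ => by ring
    rw [intervalIntegral.integral_congr he, integral_poly]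
    ring

lemma vol_W4c0 (a : ℝ) (ha0 : 0 ≤ a) (ha1 : a ≤ 1/6) :
    volume (W4c0 a) = ENNReal.ofReal (7/20736 - 19*a/5184 + a^2/144 + a^3/48 - a^4/48) := by
  refine peel_step 1 _ (meas_W4c0 a) (1/4 - a/2) (1/3 - a)
    (fun t => -1/16 + a/8 + 3*t/8 - t^2/2 + a^2/4 - a^3/2 - 3*a^2*t/2 - a*t^2) _ (by linarith) ?_ ?_ ?_ ?_
  · exact Continuous.continuousOn (by fun_prop)
  · intro t ht
    show (0:ℝ) ≤ -1/16 + a/8 + 3*t/8 - t^2/2 + a^2/4 - a^3/2 - 3*a^2*t/2 - a*t^2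
    have h1 := ht.1
    have h2 := ht.2
    have hfac : -1/16 + a/8 + 3*t/8 - t^2/2 + a^2/4 - a^3/2 - 3*a^2*t/2 - a*t^2 = (1/2 - a - t) * ((1/2 + a) * (t - (1/4 - a/2))) := by ring
    rw [hfac]
    exact mul_nonneg (by linarith) (mul_nonneg (by linarith) (by linarith))
  · intro t
    by_cases h : t ∈ Icc (1/4 - a/2) (1/3 - a)
    · rw [if_pos h]
      have hset : {z : Fin 3 → ℝ | Fin.insertNth 1 t z ∈ W4c0 a} = W3c0 a t :=
        Set.ext fun z => ⟨fun hz => hz.2, fun hz => ⟨⟨h.1, h.2⟩, hz⟩⟩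
      rw [hset]
      exact vol_W3c0 a t ha0 ha1 h.1 h.2
    · rw [if_neg h]
      have hset : {z : Fin 3 → ℝ | Fin.insertNth 1 t z ∈ W4c0 a} = ∅ :=
        Set.eq_empty_iff_forall_notMem.2 fun z hz => h ⟨hz.1.1, hz.1.2⟩
      rw [hset]; exact measure_empty
  · have he : Set.EqOn (fun t : ℝ => -1/16 + a/8 + 3*t/8 - t^2/2 + a^2/4 - a^3/2 - 3*a^2*t/2 - a*t^2)
        (fun t : ℝ => (-1/16 + a/8 + a^2/4 - a^3/2) + (3/8 - 3*a^2/2)*t + (-1/2 - a)*t^2 + 0*t^3 + 0*t^4)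
        (Set.uIcc (1/4 - a/2) (1/3 - a)) := fun t _ => by ring
    rw [intervalIntegral.integral_congr he, integral_poly]
    ring

lemma vol_W5c0 : volume W5c0 = ENNReal.ofReal (73/3732480) := by
  refine peel_step 0 _ meas_W5c0 (0) (1/6)
    (fun t => 7/20736 - 19*t/5184 + t^2/144 + t^3/48 - t^4/48) _ (by norm_num) ?_ ?_ ?_ ?_
  · exact Continuous.continuousOn (by fun_prop)
  · intro t ht
    show (0:ℝ) ≤ 7/20736 - 19*t/5184 + t^2/144 + t^3/48 - t^4/48
    have hfac : 7/20736 - 19*t/5184 + t^2/144 + t^3/48 - t^4/48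
        = (1/6 - t)^2 * ((1/2 + t) * ((7/6 - t)/48)) := by ring
    rw [hfac]
    exact mul_nonneg (sq_nonneg _) (mul_nonneg (by linarith [ht.1]) (by linarith [ht.2]))
  · intro t
    by_cases h : t ∈ Icc (0 : ℝ) (1/6)
    · rw [if_pos h]
      have hset : {y : Fin 4 → ℝ | Fin.insertNth 0 t y ∈ W5c0} = W4c0 t :=
        Set.ext fun y => ⟨fun hy => hy.2, fun hy => ⟨⟨h.1, h.2⟩, hy⟩⟩
      rw [hset]
      exact vol_W4c0 t h.1 h.2
    · rw [if_neg h]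
      have hset : {y : Fin 4 → ℝ | Fin.insertNth 0 t y ∈ W5c0} = ∅ :=
        Set.eq_empty_iff_forall_notMem.2 fun y hy => h ⟨hy.1.1, hy.1.2⟩
      rw [hset]; exact measure_empty
  · have he : Set.EqOn (fun t : ℝ => 7/20736 - 19*t/5184 + t^2/144 + t^3/48 - t^4/48)
        (fun t : ℝ => (7/20736) + (-19/5184)*t + (1/144)*t^2 + (1/48)*t^3 + (-1/48)*t^4)
        (Set.uIcc (0) (1/6)) := fun t _ => by ring
    rw [intervalIntegral.integral_congr he, integral_poly]
    norm_num


def W2c1 (a c b : ℝ) : Set (Fin 2 → ℝ) :=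
  {w | (1/2 - a/2 - b - c/2 ≤ w 1 ∧ w 1 ≤ 1/2 - a - b) ∧ (0 ≤ w 0 ∧ w 0 ≤ 1 - a - b - c - w 1)}

def W3c1 (a c : ℝ) : Set (Fin 3 → ℝ) :=
  {z | (0 ≤ z 0 ∧ z 0 ≤ 1/2 - a - c) ∧ (1/2 - a/2 - z 0 - c/2 ≤ z 2 ∧ z 2 ≤ 1/2 - a - z 0) ∧
    (0 ≤ z 1 ∧ z 1 ≤ 1 - a - z 0 - c - z 2)}

def W4c1 (a : ℝ) : Set (Fin 4 → ℝ) :=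
  {y | (1/3 - a ≤ y 1 ∧ y 1 ≤ 1/2 - a) ∧ (0 ≤ y 0 ∧ y 0 ≤ 1/2 - a - y 1) ∧
    (1/2 - a/2 - y 0 - y 1/2 ≤ y 3 ∧ y 3 ≤ 1/2 - a - y 0) ∧ (0 ≤ y 2 ∧ y 2 ≤ 1 - a - y 0 - y 1 - y 3)}

def W5c1 : Set (Fin 5 → ℝ) :=
  {x | (0 ≤ x 0 ∧ x 0 ≤ 1/6) ∧ (1/3 - x 0 ≤ x 2 ∧ x 2 ≤ 1/2 - x 0) ∧
    (0 ≤ x 1 ∧ x 1 ≤ 1/2 - x 0 - x 2) ∧ (1/2 - x 0/2 - x 1 - x 2/2 ≤ x 4 ∧ x 4 ≤ 1/2 - x 0 - x 1) ∧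
    (0 ≤ x 3 ∧ x 3 ≤ 1 - x 0 - x 1 - x 2 - x 4)}

lemma meas_W2c1 (a c b : ℝ) : MeasurableSet (W2c1 a c b) := by
  unfold W2c1
  simp only [Set.setOf_and]
  repeat' apply MeasurableSet.inter
  all_goals exact measurableSet_le (by fun_prop) (by fun_prop)

lemma meas_W3c1 (a c : ℝ) : MeasurableSet (W3c1 a c) := by
  unfold W3c1
  simp only [Set.setOf_and]
  repeat' apply MeasurableSet.inter
  all_goals exact measurableSet_le (by fun_prop) (by fun_prop)

lemma meas_W4c1 (a : ℝ) : MeasurableSet (W4c1 a) := by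
  unfold W4c1
  simp only [Set.setOf_and]
  repeat' apply MeasurableSet.inter
  all_goals exact measurableSet_le (by fun_prop) (by fun_prop)

lemma meas_W5c1 : MeasurableSet W5c1 := by
  unfold W5c1
  simp only [Set.setOf_and]
  repeat' apply MeasurableSet.inter
  all_goals exact measurableSet_le (by fun_prop) (by fun_prop)

lemma vol_W2c1 (a c b : ℝ) (ha0 : 0 ≤ a) (ha1 : a ≤ 1/6) (hc0 : 1/3 - a ≤ c) (hc1 : c ≤ 1/2 - a)
    (hb0 : 0 ≤ b) (hb1 : b ≤ 1/2 - a - c) :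
    volume (W2c1 a c b) = ENNReal.ofReal (-a/4 + c/4 + a^2/8 - 3*c^2/8 + a*c/4) := by
  refine peel_step 1 _ (meas_W2c1 a c b) (1/2 - a/2 - b - c/2) (1/2 - a - b)
    (fun t => 1 - a - b - c - t) _ (by linarith) ?_ ?_ ?_ ?_
  · exact Continuous.continuousOn (by fun_prop)
  · intro t ht
    show (0:ℝ) ≤ 1 - a - b - c - t
    linarith [ht.2]
  · intro t
    by_cases h : t ∈ Icc (1/2 - a/2 - b - c/2) (1/2 - a - b)
    · rw [if_pos h]
      have hset : {v : Fin 1 → ℝ | Fin.insertNth 1 t v ∈ W2c1 a c b} =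
          {v : Fin 1 → ℝ | 0 ≤ v 0 ∧ v 0 ≤ 1 - a - b - c - t} :=
        Set.ext fun v => ⟨fun hv => hv.2, fun hv => ⟨⟨h.1, h.2⟩, hv⟩⟩
      rw [hset, volume_fin1]
      congr 1; ring
    · rw [if_neg h]
      have hset : {v : Fin 1 → ℝ | Fin.insertNth 1 t v ∈ W2c1 a c b} = ∅ :=
        Set.eq_empty_iff_forall_notMem.2 fun v hv => h ⟨hv.1.1, hv.1.2⟩
      rw [hset]; exact measure_empty
  · have he : Set.EqOn (fun t : ℝ => 1 - a - b - c - t)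
        (fun t : ℝ => (1 - a - b - c) + (-1)*t + 0*t^2 + 0*t^3 + 0*t^4)
        (Set.uIcc (1/2 - a/2 - b - c/2) (1/2 - a - b)) := fun t _ => by ring
    rw [intervalIntegral.integral_congr he, integral_poly]
    ring

lemma vol_W3c1 (a c : ℝ) (ha0 : 0 ≤ a) (ha1 : a ≤ 1/6) (hc0 : 1/3 - a ≤ c) (hc1 : c ≤ 1/2 - a) :
    volume (W3c1 a c) = ENNReal.ofReal (-a/8 + 5*a^2/16 + a*c/8 + c/8 - 7*c^2/16 - a^3/8 - 3*a^2*c/8 + a*c^2/8 + 3*c^3/8) := by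
  refine peel_step 0 _ (meas_W3c1 a c) 0 (1/2 - a - c)
    (fun _ => -a/4 + c/4 + a^2/8 - 3*c^2/8 + a*c/4) _ (by linarith) ?_ ?_ ?_ ?_
  · exact Continuous.continuousOn (by fun_prop)
  · intro t ht
    show (0:ℝ) ≤ -a/4 + c/4 + a^2/8 - 3*c^2/8 + a*c/4
    have hfac : -a/4 + c/4 + a^2/8 - 3*c^2/8 + a*c/4 = (c - a) * ((2 - a - 3*c)/8) := by ring
    rw [hfac]
    exact mul_nonneg (by linarith) (by linarith)
  · intro t
    by_cases h : t ∈ Icc (0:ℝ) (1/2 - a - c)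
    · rw [if_pos h]
      have hset : {w : Fin 2 → ℝ | Fin.insertNth 0 t w ∈ W3c1 a c} = W2c1 a c t :=
        Set.ext fun w => ⟨fun hw => hw.2, fun hw => ⟨⟨h.1, h.2⟩, hw⟩⟩
      rw [hset]
      exact vol_W2c1 a c t ha0 ha1 hc0 hc1 h.1 h.2
    · rw [if_neg h]
      have hset : {w : Fin 2 → ℝ | Fin.insertNth 0 t w ∈ W3c1 a c} = ∅ :=
        Set.eq_empty_iff_forall_notMem.2 fun w hw => h ⟨hw.1.1, hw.1.2⟩
      rw [hset]; exact measure_empty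
  · have he : Set.EqOn (fun _ : ℝ => -a/4 + c/4 + a^2/8 - 3*c^2/8 + a*c/4)
        (fun t : ℝ => (-a/4 + c/4 + a^2/8 - 3*c^2/8 + a*c/4) + 0*t + 0*t^2 + 0*t^3 + 0*t^4)
        (Set.uIcc 0 (1/2 - a - c)) := fun t _ => by ring
    rw [intervalIntegral.integral_congr he, integral_poly]
    ring

lemma vol_W4c1 (a : ℝ) (ha0 : 0 ≤ a) (ha1 : a ≤ 1/6) :
    volume (W4c1 a) = ENNReal.ofReal (23/41472 - a/648 - a^2/144) := by
  refine peel_step 1 _ (meas_W4c1 a) (1/3 - a) (1/2 - a)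
    (fun t => -a/8 + 5*a^2/16 + a*t/8 + t/8 - 7*t^2/16 - a^3/8 - 3*a^2*t/8 + a*t^2/8 + 3*t^3/8) _ (by linarith) ?_ ?_ ?_ ?_
  · exact Continuous.continuousOn (by fun_prop)
  · intro t ht
    show (0:ℝ) ≤ -a/8 + 5*a^2/16 + a*t/8 + t/8 - 7*t^2/16 - a^3/8 - 3*a^2*t/8 + a*t^2/8 + 3*t^3/8
    have h1 := ht.1
    have h2 := ht.2
    have hfac : -a/8 + 5*a^2/16 + a*t/8 + t/8 - 7*t^2/16 - a^3/8 - 3*a^2*t/8 + a*t^2/8 + 3*t^3/8 = (1/2 - a - t) * ((t - a) * ((2 - a - 3*t)/8)) := by ring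
    rw [hfac]
    exact mul_nonneg (by linarith) (mul_nonneg (by linarith) (by linarith))
  · intro t
    by_cases h : t ∈ Icc (1/3 - a) (1/2 - a)
    · rw [if_pos h]
      have hset : {z : Fin 3 → ℝ | Fin.insertNth 1 t z ∈ W4c1 a} = W3c1 a t :=
        Set.ext fun z => ⟨fun hz => hz.2, fun hz => ⟨⟨h.1, h.2⟩, hz⟩⟩
      rw [hset]
      exact vol_W3c1 a t ha0 ha1 h.1 h.2
    · rw [if_neg h]
      have hset : {z : Fin 3 → ℝ | Fin.insertNth 1 t z ∈ W4c1 a} = ∅ :=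
        Set.eq_empty_iff_forall_notMem.2 fun z hz => h ⟨hz.1.1, hz.1.2⟩
      rw [hset]; exact measure_empty
  · have he : Set.EqOn (fun t : ℝ => -a/8 + 5*a^2/16 + a*t/8 + t/8 - 7*t^2/16 - a^3/8 - 3*a^2*t/8 + a*t^2/8 + 3*t^3/8)
        (fun t : ℝ => (-a/8 + 5*a^2/16 - a^3/8) + (1/8 + a/8 - 3*a^2/8)*t + (-7/16 + a/8)*t^2 + (3/8)*t^3 + 0*t^4)
        (Set.uIcc (1/3 - a) (1/2 - a)) := fun t _ => by ring
    rw [intervalIntegral.integral_congr he, integral_poly]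
    ring

lemma vol_W5c1 : volume W5c1 = ENNReal.ofReal (5/82944) := by
  refine peel_step 0 _ meas_W5c1 (0) (1/6)
    (fun t => 23/41472 - t/648 - t^2/144) _ (by norm_num) ?_ ?_ ?_ ?_
  · exact Continuous.continuousOn (by fun_prop)
  · intro t ht
    show (0:ℝ) ≤ 23/41472 - t/648 - t^2/144
    nlinarith [mul_nonneg ht.1 (sub_nonneg.mpr ht.2)]
  · intro t
    by_cases h : t ∈ Icc (0 : ℝ) (1/6)
    · rw [if_pos h]
      have hset : {y : Fin 4 → ℝ | Fin.insertNth 0 t y ∈ W5c1} = W4c1 t :=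
        Set.ext fun y => ⟨fun hy => hy.2, fun hy => ⟨⟨h.1, h.2⟩, hy⟩⟩
      rw [hset]
      exact vol_W4c1 t h.1 h.2
    · rw [if_neg h]
      have hset : {y : Fin 4 → ℝ | Fin.insertNth 0 t y ∈ W5c1} = ∅ :=
        Set.eq_empty_iff_forall_notMem.2 fun y hy => h ⟨hy.1.1, hy.1.2⟩
      rw [hset]; exact measure_empty
  · have he : Set.EqOn (fun t : ℝ => 23/41472 - t/648 - t^2/144)
        (fun t : ℝ => (23/41472) + (-1/648)*t + (-1/144)*t^2 + 0*t^3 + 0*t^4)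
        (Set.uIcc (0) (1/6)) := fun t _ => by ring
    rw [intervalIntegral.integral_congr he, integral_poly]
    norm_num


def W2c2 (a c b : ℝ) : Set (Fin 2 → ℝ) :=
  {w | (1/2 - a/2 - b - c/2 ≤ w 1 ∧ w 1 ≤ 1/2 - a - b) ∧ (0 ≤ w 0 ∧ w 0 ≤ 1 - a - b - c - w 1)}

def W3c2 (a c : ℝ) : Set (Fin 3 → ℝ) :=
  {z | (0 ≤ z 0 ∧ z 0 ≤ 1/2 - a - c) ∧ (1/2 - a/2 - z 0 - c/2 ≤ z 2 ∧ z 2 ≤ 1/2 - a - z 0) ∧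
    (0 ≤ z 1 ∧ z 1 ≤ 1 - a - z 0 - c - z 2)}

def W4c2 (a : ℝ) : Set (Fin 4 → ℝ) :=
  {y | (a ≤ y 1 ∧ y 1 ≤ 1/2 - a) ∧ (0 ≤ y 0 ∧ y 0 ≤ 1/2 - a - y 1) ∧
    (1/2 - a/2 - y 0 - y 1/2 ≤ y 3 ∧ y 3 ≤ 1/2 - a - y 0) ∧ (0 ≤ y 2 ∧ y 2 ≤ 1 - a - y 0 - y 1 - y 3)}

def W5c2 : Set (Fin 5 → ℝ) :=
  {x | (1/6 ≤ x 0 ∧ x 0 ≤ 1/4) ∧ (x 0 ≤ x 2 ∧ x 2 ≤ 1/2 - x 0) ∧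
    (0 ≤ x 1 ∧ x 1 ≤ 1/2 - x 0 - x 2) ∧ (1/2 - x 0/2 - x 1 - x 2/2 ≤ x 4 ∧ x 4 ≤ 1/2 - x 0 - x 1) ∧
    (0 ≤ x 3 ∧ x 3 ≤ 1 - x 0 - x 1 - x 2 - x 4)}

lemma meas_W2c2 (a c b : ℝ) : MeasurableSet (W2c2 a c b) := by
  unfold W2c2
  simp only [Set.setOf_and]
  repeat' apply MeasurableSet.inter
  all_goals exact measurableSet_le (by fun_prop) (by fun_prop)

lemma meas_W3c2 (a c : ℝ) : MeasurableSet (W3c2 a c) := by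
  unfold W3c2
  simp only [Set.setOf_and]
  repeat' apply MeasurableSet.inter
  all_goals exact measurableSet_le (by fun_prop) (by fun_prop)

lemma meas_W4c2 (a : ℝ) : MeasurableSet (W4c2 a) := by
  unfold W4c2
  simp only [Set.setOf_and]
  repeat' apply MeasurableSet.inter
  all_goals exact measurableSet_le (by fun_prop) (by fun_prop)

lemma meas_W5c2 : MeasurableSet W5c2 := by
  unfold W5c2
  simp only [Set.setOf_and]
  repeat' apply MeasurableSet.inter
  all_goals exact measurableSet_le (by fun_prop) (by fun_prop)

lemma vol_W2c2 (a c b : ℝ) (ha0 : 1/6 ≤ a) (ha1 : a ≤ 1/4) (hc0 : a ≤ c) (hc1 : c ≤ 1/2 - a)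
    (hb0 : 0 ≤ b) (hb1 : b ≤ 1/2 - a - c) :
    volume (W2c2 a c b) = ENNReal.ofReal (-a/4 + c/4 + a^2/8 - 3*c^2/8 + a*c/4) := by
  refine peel_step 1 _ (meas_W2c2 a c b) (1/2 - a/2 - b - c/2) (1/2 - a - b)
    (fun t => 1 - a - b - c - t) _ (by linarith) ?_ ?_ ?_ ?_
  · exact Continuous.continuousOn (by fun_prop)
  · intro t ht
    show (0:ℝ) ≤ 1 - a - b - c - t
    linarith [ht.2]
  · intro t
    by_cases h : t ∈ Icc (1/2 - a/2 - b - c/2) (1/2 - a - b)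
    · rw [if_pos h]
      have hset : {v : Fin 1 → ℝ | Fin.insertNth 1 t v ∈ W2c2 a c b} =
          {v : Fin 1 → ℝ | 0 ≤ v 0 ∧ v 0 ≤ 1 - a - b - c - t} :=
        Set.ext fun v => ⟨fun hv => hv.2, fun hv => ⟨⟨h.1, h.2⟩, hv⟩⟩
      rw [hset, volume_fin1]
      congr 1; ring
    · rw [if_neg h]
      have hset : {v : Fin 1 → ℝ | Fin.insertNth 1 t v ∈ W2c2 a c b} = ∅ :=
        Set.eq_empty_iff_forall_notMem.2 fun v hv => h ⟨hv.1.1, hv.1.2⟩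
      rw [hset]; exact measure_empty
  · have he : Set.EqOn (fun t : ℝ => 1 - a - b - c - t)
        (fun t : ℝ => (1 - a - b - c) + (-1)*t + 0*t^2 + 0*t^3 + 0*t^4)
        (Set.uIcc (1/2 - a/2 - b - c/2) (1/2 - a - b)) := fun t _ => by ring
    rw [intervalIntegral.integral_congr he, integral_poly]
    ring

lemma vol_W3c2 (a c : ℝ) (ha0 : 1/6 ≤ a) (ha1 : a ≤ 1/4) (hc0 : a ≤ c) (hc1 : c ≤ 1/2 - a) :
    volume (W3c2 a c) = ENNReal.ofReal (-a/8 + 5*a^2/16 + a*c/8 + c/8 - 7*c^2/16 - a^3/8 - 3*a^2*c/8 + a*c^2/8 + 3*c^3/8) := by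
  refine peel_step 0 _ (meas_W3c2 a c) 0 (1/2 - a - c)
    (fun _ => -a/4 + c/4 + a^2/8 - 3*c^2/8 + a*c/4) _ (by linarith) ?_ ?_ ?_ ?_
  · exact Continuous.continuousOn (by fun_prop)
  · intro t ht
    show (0:ℝ) ≤ -a/4 + c/4 + a^2/8 - 3*c^2/8 + a*c/4
    have hfac : -a/4 + c/4 + a^2/8 - 3*c^2/8 + a*c/4 = (c - a) * ((2 - a - 3*c)/8) := by ring
    rw [hfac]
    exact mul_nonneg (by linarith) (by linarith)
  · intro t
    by_cases h : t ∈ Icc (0:ℝ) (1/2 - a - c)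
    · rw [if_pos h]
      have hset : {w : Fin 2 → ℝ | Fin.insertNth 0 t w ∈ W3c2 a c} = W2c2 a c t :=
        Set.ext fun w => ⟨fun hw => hw.2, fun hw => ⟨⟨h.1, h.2⟩, hw⟩⟩
      rw [hset]
      exact vol_W2c2 a c t ha0 ha1 hc0 hc1 h.1 h.2
    · rw [if_neg h]
      have hset : {w : Fin 2 → ℝ | Fin.insertNth 0 t w ∈ W3c2 a c} = ∅ :=
        Set.eq_empty_iff_forall_notMem.2 fun w hw => h ⟨hw.1.1, hw.1.2⟩
      rw [hset]; exact measure_empty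
  · have he : Set.EqOn (fun _ : ℝ => -a/4 + c/4 + a^2/8 - 3*c^2/8 + a*c/4)
        (fun t : ℝ => (-a/4 + c/4 + a^2/8 - 3*c^2/8 + a*c/4) + 0*t + 0*t^2 + 0*t^3 + 0*t^4)
        (Set.uIcc 0 (1/2 - a - c)) := fun t _ => by ring
    rw [intervalIntegral.integral_congr he, integral_poly]
    ring

lemma vol_W4c2 (a : ℝ) (ha0 : 1/6 ≤ a) (ha1 : a ≤ 1/4) :
    volume (W4c2 a) = ENNReal.ofReal (5/1536 - a/24 + 3*a^2/16 - a^3/3 + a^4/6) := by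
  refine peel_step 1 _ (meas_W4c2 a) (a) (1/2 - a)
    (fun t => -a/8 + 5*a^2/16 + a*t/8 + t/8 - 7*t^2/16 - a^3/8 - 3*a^2*t/8 + a*t^2/8 + 3*t^3/8) _ (by linarith) ?_ ?_ ?_ ?_
  · exact Continuous.continuousOn (by fun_prop)
  · intro t ht
    show (0:ℝ) ≤ -a/8 + 5*a^2/16 + a*t/8 + t/8 - 7*t^2/16 - a^3/8 - 3*a^2*t/8 + a*t^2/8 + 3*t^3/8
    have h1 := ht.1
    have h2 := ht.2
    have hfac : -a/8 + 5*a^2/16 + a*t/8 + t/8 - 7*t^2/16 - a^3/8 - 3*a^2*t/8 + a*t^2/8 + 3*t^3/8 = (1/2 - a - t) * ((t - a) * ((2 - a - 3*t)/8)) := by ring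
    rw [hfac]
    exact mul_nonneg (by linarith) (mul_nonneg (by linarith) (by linarith))
  · intro t
    by_cases h : t ∈ Icc (a) (1/2 - a)
    · rw [if_pos h]
      have hset : {z : Fin 3 → ℝ | Fin.insertNth 1 t z ∈ W4c2 a} = W3c2 a t :=
        Set.ext fun z => ⟨fun hz => hz.2, fun hz => ⟨⟨h.1, h.2⟩, hz⟩⟩
      rw [hset]
      exact vol_W3c2 a t ha0 ha1 h.1 h.2
    · rw [if_neg h]
      have hset : {z : Fin 3 → ℝ | Fin.insertNth 1 t z ∈ W4c2 a} = ∅ :=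
        Set.eq_empty_iff_forall_notMem.2 fun z hz => h ⟨hz.1.1, hz.1.2⟩
      rw [hset]; exact measure_empty
  · have he : Set.EqOn (fun t : ℝ => -a/8 + 5*a^2/16 + a*t/8 + t/8 - 7*t^2/16 - a^3/8 - 3*a^2*t/8 + a*t^2/8 + 3*t^3/8)
        (fun t : ℝ => (-a/8 + 5*a^2/16 - a^3/8) + (1/8 + a/8 - 3*a^2/8)*t + (-7/16 + a/8)*t^2 + (3/8)*t^3 + 0*t^4)
        (Set.uIcc (a) (1/2 - a)) := fun t _ => by ring
    rw [intervalIntegral.integral_congr he, integral_poly]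
    ring

lemma vol_W5c2 : volume W5c2 = ENNReal.ofReal (1/466560) := by
  refine peel_step 0 _ meas_W5c2 (1/6) (1/4)
    (fun t => 5/1536 - t/24 + 3*t^2/16 - t^3/3 + t^4/6) _ (by norm_num) ?_ ?_ ?_ ?_
  · exact Continuous.continuousOn (by fun_prop)
  · intro t ht
    show (0:ℝ) ≤ 5/1536 - t/24 + 3*t^2/16 - t^3/3 + t^4/6
    have hfac : 5/1536 - t/24 + 3*t^2/16 - t^3/3 + t^4/6
        = (1/4 - t)^3 * (5/24 - t/6) := by ring
    rw [hfac]
    exact mul_nonneg (pow_nonneg (by linarith [ht.2]) 3) (by linarith [ht.2])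
  · intro t
    by_cases h : t ∈ Icc (1/6 : ℝ) (1/4)
    · rw [if_pos h]
      have hset : {y : Fin 4 → ℝ | Fin.insertNth 0 t y ∈ W5c2} = W4c2 t :=
        Set.ext fun y => ⟨fun hy => hy.2, fun hy => ⟨⟨h.1, h.2⟩, hy⟩⟩
      rw [hset]
      exact vol_W4c2 t h.1 h.2
    · rw [if_neg h]
      have hset : {y : Fin 4 → ℝ | Fin.insertNth 0 t y ∈ W5c2} = ∅ :=
        Set.eq_empty_iff_forall_notMem.2 fun y hy => h ⟨hy.1.1, hy.1.2⟩
      rw [hset]; exact measure_empty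
  · have he : Set.EqOn (fun t : ℝ => 5/1536 - t/24 + 3*t^2/16 - t^3/3 + t^4/6)
        (fun t : ℝ => (5/1536) + (-1/24)*t + (3/16)*t^2 + (-1/3)*t^3 + (1/6)*t^4)
        (Set.uIcc (1/6) (1/4)) := fun t _ => by ring
    rw [intervalIntegral.integral_congr he, integral_poly]
    norm_num

lemma null_x0 : volume {x : Fin 5 → ℝ | x 0 = 1/6} = 0 := by
  rw [volume_pi]
  exact Measure.pi_hyperplane _ 0 _

lemma null_x0x2 : volume {x : Fin 5 → ℝ | x 0 + x 2 = 1/3} = 0 := by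
  have hm : MeasurableSet {x : Fin 5 → ℝ | x 0 + x 2 = 1/3} :=
    measurableSet_eq_fun (by fun_prop) measurable_const
  rw [volume_peel 0 _ hm]
  have h1 : ∀ t : ℝ, {y : Fin 4 → ℝ | Fin.insertNth (0 : Fin 5) t y ∈
      {x : Fin 5 → ℝ | x 0 + x 2 = 1/3}} = {y : Fin 4 → ℝ | y 1 = 1/3 - t} := by
    intro t
    ext y
    simp only [Set.mem_setOf_eq]
    show t + y 1 = 1/3 ↔ y 1 = 1/3 - t
    constructor <;> intro h <;> linarith
  have h2 : ∀ t : ℝ, volume {y : Fin 4 → ℝ | Fin.insertNth (0 : Fin 5) t y ∈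
      {x : Fin 5 → ℝ | x 0 + x 2 = 1/3}} = 0 := by
    intro t
    rw [h1 t, volume_pi]
    exact Measure.pi_hyperplane _ 1 _
  simp_rw [h2]
  simp

lemma S_eq : {x : Fin 5 → ℝ |
      (∀ i, 0 ≤ x i) ∧ x 0 + x 1 + x 2 + x 3 + x 4 ≤ 1 ∧
      1 ≤ x 0 + 2 * x 1 + x 2 + 2 * x 4 ∧ 1 ≤ 2 * x 0 + x 1 + 2 * x 2 + x 4 ∧
      2 * (x 0 + x 1 + x 4) ≤ 1 ∧ 2 * (x 0 + x 1 + x 2) ≤ 1} = (W5c0 ∪ W5c1) ∪ W5c2 := by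
  ext x
  simp only [Set.mem_setOf_eq, Set.mem_union]
  constructor
  · rintro ⟨hnn, hsum, h1, h2, h3, h4⟩
    have hx0 := hnn 0
    have hx1 := hnn 1
    have hx2 := hnn 2
    have hx3 := hnn 3
    have hx4 := hnn 4
    by_cases hA : x 0 ≤ 1/6
    · by_cases hC : x 0 + x 2 ≤ 1/3
      · exact Or.inl (Or.inl ⟨⟨by linarith, by linarith⟩, ⟨by linarith, by linarith⟩,
          ⟨by linarith, by linarith⟩, ⟨by linarith, by linarith⟩, ⟨by linarith, by linarith⟩⟩)
      · exact Or.inl (Or.inr ⟨⟨by linarith, by linarith⟩, ⟨by linarith, by linarith⟩,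
          ⟨by linarith, by linarith⟩, ⟨by linarith, by linarith⟩, ⟨by linarith, by linarith⟩⟩)
    · exact Or.inr ⟨⟨by linarith, by linarith⟩, ⟨by linarith, by linarith⟩,
        ⟨by linarith, by linarith⟩, ⟨by linarith, by linarith⟩, ⟨by linarith, by linarith⟩⟩
  · rintro ((⟨⟨p1, p2⟩, ⟨p3, p4⟩, ⟨p5, p6⟩, ⟨p7, p8⟩, ⟨p9, p10⟩⟩ |
      ⟨⟨p1, p2⟩, ⟨p3, p4⟩, ⟨p5, p6⟩, ⟨p7, p8⟩, ⟨p9, p10⟩⟩) |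
      ⟨⟨p1, p2⟩, ⟨p3, p4⟩, ⟨p5, p6⟩, ⟨p7, p8⟩, ⟨p9, p10⟩⟩) <;>
    refine ⟨?_, by linarith, by linarith, by linarith, by linarith, by linarith⟩ <;>
    · intro i
      rcases i with ⟨iv, hiv⟩
      interval_cases iv
      · show (0:ℝ) ≤ x 0; linarith
      · show (0:ℝ) ≤ x 1; linarith
      · show (0:ℝ) ≤ x 2; linarith
      · show (0:ℝ) ≤ x 3; linarith
      · show (0:ℝ) ≤ x 4; linarith

/-- The 5-dimensional Lebesgue volume of the set of voting situations in which
`a` is the antiplurality winner and also the Condorcet loser equals `17/207360`;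
that is, the limiting probability of Borda's paradox for the antiplurality rule
under IAC for 3 candidates is `3·120·(17/207360) = 17/576`. -/
theorem borda_paradox_antiplurality :
    volume {x : Fin 5 → ℝ |
      (∀ i, 0 ≤ x i) ∧ x 0 + x 1 + x 2 + x 3 + x 4 ≤ 1 ∧
      1 ≤ x 0 + 2 * x 1 + x 2 + 2 * x 4 ∧ 1 ≤ 2 * x 0 + x 1 + 2 * x 2 + x 4 ∧
      2 * (x 0 + x 1 + x 4) ≤ 1 ∧ 2 * (x 0 + x 1 + x 2) ≤ 1} = 17 / 207360 ∧
    3 * 120 * volume {x : Fin 5 → ℝ |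
      (∀ i, 0 ≤ x i) ∧ x 0 + x 1 + x 2 + x 3 + x 4 ≤ 1 ∧
      1 ≤ x 0 + 2 * x 1 + x 2 + 2 * x 4 ∧ 1 ≤ 2 * x 0 + x 1 + 2 * x 2 + x 4 ∧
      2 * (x 0 + x 1 + x 4) ≤ 1 ∧ 2 * (x 0 + x 1 + x 2) ≤ 1} = 17 / 576 := by
  have hd1 : volume (W5c0 ∩ W5c1) = 0 := by
    refine measure_mono_null ?_ null_x0x2
    rintro x ⟨hx0, hx1⟩
    have q1 : x 2 ≤ 1/3 - x 0 := hx0.2.1.2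
    have q2 : 1/3 - x 0 ≤ x 2 := hx1.2.1.1
    show x 0 + x 2 = 1/3
    linarith
  have hd2 : volume ((W5c0 ∪ W5c1) ∩ W5c2) = 0 := by
    refine measure_mono_null ?_ null_x0
    rintro x ⟨hx01, hx2⟩
    have q2 : 1/6 ≤ x 0 := hx2.1.1
    have q1 : x 0 ≤ 1/6 := by
      rcases hx01 with h | h
      · exact h.1.2
      · exact h.1.2
    show x 0 = 1/6
    linarith
  have hu1 : volume (W5c0 ∪ W5c1) = ENNReal.ofReal (73/3732480) + ENNReal.ofReal (5/82944) := by
    rw [measure_union₀ meas_W5c1.nullMeasurableSet hd1, vol_W5c0, vol_W5c1]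
  have hu2 : volume ((W5c0 ∪ W5c1) ∪ W5c2) = ENNReal.ofReal (17/207360) := by
    rw [measure_union₀ meas_W5c2.nullMeasurableSet hd2, hu1, vol_W5c2,
      ← ENNReal.ofReal_add (by norm_num) (by norm_num),
      ← ENNReal.ofReal_add (by norm_num) (by norm_num)]
    norm_num
  have key : volume {x : Fin 5 → ℝ |
      (∀ i, 0 ≤ x i) ∧ x 0 + x 1 + x 2 + x 3 + x 4 ≤ 1 ∧
      1 ≤ x 0 + 2 * x 1 + x 2 + 2 * x 4 ∧ 1 ≤ 2 * x 0 + x 1 + 2 * x 2 + x 4 ∧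
      2 * (x 0 + x 1 + x 4) ≤ 1 ∧ 2 * (x 0 + x 1 + x 2) ≤ 1} = ENNReal.ofReal (17/207360) := by
    rw [S_eq]; exact hu2
  constructor
  · rw [key, show ((17:ℝ)/207360) = 17/207360 from rfl,
      ENNReal.ofReal_div_of_pos (by norm_num), ENNReal.ofReal_ofNat, ENNReal.ofReal_ofNat]
  · rw [key, (show (3 * 120 : ENNReal) = ENNReal.ofReal 360 by rw [ENNReal.ofReal_ofNat]; norm_num),
      ← ENNReal.ofReal_mul (by norm_num),
      (show (360 * (17/207360) : ℝ) = 17/576 by norm_num),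
      ENNReal.ofReal_div_of_pos (by norm_num), ENNReal.ofReal_ofNat, ENNReal.ofReal_ofNat]
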